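/- Let p be a prime, δ ∈ {1,...,p-1}, n ≥ 0, and λ a partition of size at most n. The orbit O_λ^p(n;δ) = {μ partition, |μ| ≤ n : μ̂ + ρ_n(δ) ∼_p λ̂ + ρ_n(δ)} contains a unique element of minimal size; that is, there exists μ_0 ∈ O_λ^p(n;δ) such that every μ ∈ O_λ^p(n;δ) satisfies |μ| ≥ |μ_0|, with equality only if μ = μ_0. -/

import Mathlib

def IsPartWithin (n : ℕ) (f : ℕ → ℕ) : Prop :=
  (∀ i j, i ≤ j → f j ≤ f i) ∧ ∀ i, n ≤ i → f i = 0

def psize (n : ℕ) (f : ℕ → ℕ) : ℕ := ∑ i ∈ Finset.range n, f i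

/-- the integral `(n+1)`-tuple `f̂ + ρ_n(δ) = (δ - |f|, f_1 - 1, …, f_n - n)`. -/
def hatRhoZ (n : ℕ) (δ : ℤ) (f : ℕ → ℕ) : Fin (n + 1) → ℤ :=
  fun m => if (m : ℕ) = 0 then δ - (psize n f : ℤ)
    else (f ((m : ℕ) - 1) : ℤ) - ((m : ℕ) : ℤ)

/-- `μ̂ + ρ_n(δ) ∼_p λ̂ + ρ_n(δ)`: the tuples agree up to a permutation of the
coordinates, modulo `p`. -/
def SimP (p n : ℕ) (δ : ℤ) (mu lam : ℕ → ℕ) : Prop :=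
  ∃ σ : Equiv.Perm (Fin (n + 1)), ∀ m,
    ((hatRhoZ n δ mu m : ℤ) : ZMod p) = ((hatRhoZ n δ lam (σ m) : ℤ) : ZMod p)

/-- membership in the orbit `O_λ^p(n;δ)`. -/
def InOrbit (p n : ℕ) (δ : ℤ) (lam mu : ℕ → ℕ) : Prop :=
  IsPartWithin n mu ∧ psize n mu ≤ n ∧ SimP p n δ mu lam


set_option linter.unusedSectionVars false
open Finset
lemma nat_finset_sum_min : ∀ (m : ℕ) (T : Finset ℕ), T.card = m →
    (∑ i ∈ range m, i ≤ ∑ x ∈ T, x ∧ (∑ x ∈ T, x = ∑ i ∈ range m, i → T = range m)) := by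
  intro m
  induction m with
  | zero => intro T hT; simp [Finset.card_eq_zero.mp hT]
  | succ m ih =>
    intro T hT
    have hne : T.Nonempty := Finset.card_pos.mp (by omega)
    set M := T.max' hne with hM
    have hMmem : M ∈ T := T.max'_mem hne
    have hMle : m ≤ M := by
      by_contra h
      push_neg at h
      have hsub : T ⊆ range (M + 1) := by
        intro x hx
        simp only [Finset.mem_range]
        have := T.le_max' x hx
        omega
      have := Finset.card_le_card hsub
      simp [Finset.card_range] at this
      omega
    have hT' : (T.erase M).card = m := by
      rw [Finset.card_erase_of_mem hMmem, hT]; omega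
    obtain ⟨ih1, ih2⟩ := ih (T.erase M) hT'
    have hsum : ∑ x ∈ T, x = M + ∑ x ∈ T.erase M, x :=
      (Finset.add_sum_erase T _ hMmem).symm
    have hr : ∑ i ∈ range (m+1), i = (∑ i ∈ range m, i) + m := by
      rw [Finset.sum_range_succ]
    constructor
    · omega
    · intro heq
      have hM' : M = m ∧ ∑ x ∈ T.erase M, x = ∑ i ∈ range m, i := by
        constructor <;> omega
      have hTe := ih2 hM'.2
      have hins : T = insert M (T.erase M) := (Finset.insert_erase hMmem).symm
      rw [hins, hTe, hM'.1, Finset.range_add_one]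


lemma exists_perm_of_map_univ_eq {α : Type*} [DecidableEq α] :
    ∀ {m : ℕ} (f g : Fin m → α),
      Multiset.map f Finset.univ.val = Multiset.map g Finset.univ.val →
      ∃ σ : Equiv.Perm (Fin m), ∀ i, f i = g (σ i) := by
  intro m
  induction m with
  | zero => intro f g _; exact ⟨1, fun i => i.elim0⟩
  | succ m ih =>
    intro f g h
    have hmem : f 0 ∈ Multiset.map g Finset.univ.val := by
      rw [← h]
      exact Multiset.mem_map_of_mem _ (Finset.mem_univ_val _)
    obtain ⟨j, _, hj⟩ := Multiset.mem_map.mp hmem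
    set g' : Fin (m+1) → α := g ∘ (Equiv.swap 0 j) with hg'
    have hg'univ : Multiset.map g' Finset.univ.val = Multiset.map g Finset.univ.val := by
      rw [hg', ← Multiset.map_map, Multiset.map_univ_val_equiv]
    have h' : Multiset.map f Finset.univ.val = Multiset.map g' Finset.univ.val := by
      rw [h, hg'univ]
    rw [Fin.univ_val_map, Fin.univ_val_map] at h'
    rw [List.ofFn_succ, List.ofFn_succ (f := g')] at h'
    have hg'0 : g' 0 = f 0 := by
      simp [hg', hj]
    rw [hg'0] at h'
    have htail : Multiset.map (fun i : Fin m => f i.succ) Finset.univ.val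
        = Multiset.map (fun i : Fin m => g' i.succ) Finset.univ.val := by
      rw [Fin.univ_val_map, Fin.univ_val_map]
      have := h'
      rw [← Multiset.cons_coe, ← Multiset.cons_coe] at this
      exact (Multiset.cons_inj_right _).mp this
    obtain ⟨σ', hσ'⟩ := ih _ _ htail
    refine ⟨Equiv.Perm.decomposeFin.symm (j, σ'), fun i => ?_⟩
    refine Fin.cases ?_ (fun i => ?_) i
    · simp [hj]
    · rw [Equiv.Perm.decomposeFin_symm_apply_succ]
      exact hσ' i

section
variable {p : ℕ} [NeZero p]

/-- least integer `≥ -n` congruent to `r` mod `p`. -/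
def rbase (p n : ℕ) [NeZero p] (r : ZMod p) : ℤ := ((r + (n : ZMod p)).val : ℤ) - (n : ℤ)

lemma rbase_lb (n : ℕ) (r : ZMod p) : -(n : ℤ) ≤ rbase p n r := by
  have : (0 : ℤ) ≤ ((r + (n : ZMod p)).val : ℤ) := Int.natCast_nonneg _
  unfold rbase; omega

lemma rbase_ub (n : ℕ) (r : ZMod p) : rbase p n r < -(n : ℤ) + p := by
  have : (r + (n : ZMod p)).val < p := ZMod.val_lt _
  unfold rbase; omega

lemma rbase_res (n : ℕ) (r : ZMod p) : ((rbase p n r : ℤ) : ZMod p) = r := by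
  unfold rbase
  push_cast
  rw [ZMod.natCast_val, ZMod.cast_id]
  ring

/-- the `m` smallest integers `≥ -n` congruent to `r` mod `p`. -/
def minFill (p n : ℕ) [NeZero p] (r : ZMod p) (m : ℕ) : Finset ℤ :=
  (range m).image (fun k : ℕ => rbase p n r + (k : ℤ) * p)

lemma minFill_inj (n : ℕ) (r : ZMod p) :
    Function.Injective (fun k : ℕ => rbase p n r + (k : ℤ) * p) := by
  intro a b hab
  have hp : 0 < (p : ℤ) := by exact_mod_cast Nat.pos_of_ne_zero (NeZero.ne p)
  simp only at hab
  have : (a : ℤ) = b := by nlinarith [hab]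
  exact_mod_cast this

lemma card_minFill (n : ℕ) (r : ZMod p) (m : ℕ) : (minFill p n r m).card = m := by
  rw [minFill, Finset.card_image_of_injective _ (minFill_inj n r), Finset.card_range]

lemma mem_minFill {n : ℕ} {r : ZMod p} {m : ℕ} {x : ℤ} (hx : x ∈ minFill p n r m) :
    -(n : ℤ) ≤ x ∧ ((x : ZMod p) = r) := by
  obtain ⟨k, _, rfl⟩ := Finset.mem_image.mp hx
  constructor
  · have h1 : (0:ℤ) ≤ (k : ℤ) * p := by positivity
    have h2 := rbase_lb (p := p) n r
    omega
  · push_cast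
    rw [rbase_res]
    simp

lemma minFill_succ (n : ℕ) (r : ZMod p) (m : ℕ) :
    minFill p n r (m + 1) = insert (rbase p n r + (m : ℤ) * p) (minFill p n r m) := by
  rw [minFill, minFill, Finset.range_add_one, Finset.image_insert]

lemma not_mem_minFill_top (n : ℕ) (r : ZMod p) (m : ℕ) :
    rbase p n r + (m : ℤ) * p ∉ minFill p n r m := by
  intro h
  obtain ⟨k, hk, hke⟩ := Finset.mem_image.mp h
  have : k = m := minFill_inj n r hke
  simp only [Finset.mem_range] at hk
  omega

lemma sum_minFill_succ (n : ℕ) (r : ZMod p) (m : ℕ) :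
    ∑ x ∈ minFill p n r (m + 1), x = (∑ x ∈ minFill p n r m, x) + (rbase p n r + (m : ℤ) * p) := by
  rw [minFill_succ, Finset.sum_insert (not_mem_minFill_top n r m)]
  ring

/-- key per-runner minimality lemma -/
lemma runner_min (n : ℕ) (r : ZMod p) (m : ℕ) (S : Finset ℤ) (hcard : S.card = m)
    (hmem : ∀ x ∈ S, -(n : ℤ) ≤ x ∧ ((x : ZMod p) = r)) :
    ∑ x ∈ minFill p n r m, x ≤ ∑ x ∈ S, x ∧
      (∑ x ∈ S, x = ∑ x ∈ minFill p n r m, x → S = minFill p n r m) := by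
  have hp : 0 < (p : ℤ) := by exact_mod_cast Nat.pos_of_ne_zero (NeZero.ne p)
  set tf : ℤ → ℕ := fun x => ((x - rbase p n r) / p).toNat with htf
  have hrep : ∀ x ∈ S, x = rbase p n r + (tf x : ℤ) * p := by
    intro x hx
    obtain ⟨hxl, hxr⟩ := hmem x hx
    have hdvd : (p : ℤ) ∣ (x - rbase p n r) := by
      rw [← ZMod.intCast_zmod_eq_zero_iff_dvd]
      push_cast
      rw [hxr, rbase_res]
      ring
    obtain ⟨t, ht⟩ := hdvd
    have hbub := rbase_ub (p := p) n r
    have htnn : 0 ≤ t := by nlinarith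
    have hdiv : (x - rbase p n r) / p = t := by
      rw [ht]; exact Int.mul_ediv_cancel_left _ (by omega)
    simp only [htf, hdiv, Int.toNat_of_nonneg htnn]
    linear_combination ht
  have hinj : Set.InjOn tf S := by
    intro a ha b hb hab
    have h1 := hrep a ha
    have h2 := hrep b hb
    conv_lhs => rw [h1]
    conv_rhs => rw [h2]
    rw [hab]
  set T : Finset ℕ := S.image tf with hT
  have hTcard : T.card = m := by rw [hT, Finset.card_image_of_injOn hinj, hcard]
  have hsumS : ∑ x ∈ S, x = m * rbase p n r + (∑ t ∈ T, (t : ℤ)) * p := by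
    calc ∑ x ∈ S, x = ∑ x ∈ S, (rbase p n r + (tf x : ℤ) * p) := Finset.sum_congr rfl hrep
      _ = (S.card : ℤ) * rbase p n r + ∑ x ∈ S, (tf x : ℤ) * p := by
          rw [Finset.sum_add_distrib, Finset.sum_const, nsmul_eq_mul]
      _ = m * rbase p n r + (∑ x ∈ S, (tf x : ℤ)) * p := by rw [hcard, Finset.sum_mul]
      _ = m * rbase p n r + (∑ t ∈ T, (t : ℤ)) * p := by
          rw [hT, Finset.sum_image (fun x hx y hy h => hinj hx hy h)]
  have hsumF : ∀ m' : ℕ, ∑ x ∈ minFill p n r m', x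
      = m' * rbase p n r + (∑ i ∈ range m', (i : ℤ)) * p := by
    intro m'
    induction m' with
    | zero => simp [minFill]
    | succ k ihk =>
      rw [sum_minFill_succ, ihk, Finset.sum_range_succ]
      push_cast
      ring
  obtain ⟨hle, heqc⟩ := nat_finset_sum_min m T hTcard
  have hles : (∑ i ∈ range m, (i:ℤ)) ≤ ∑ t ∈ T, (t : ℤ) := by
    rw [← Nat.cast_sum, ← Nat.cast_sum]
    exact_mod_cast hle
  constructor
  · rw [hsumS, hsumF]
    nlinarith
  · intro heq
    rw [hsumS, hsumF] at heq
    have hTsum : ∑ t ∈ T, (t : ℤ) = ∑ i ∈ range m, (i : ℤ) := by nlinarith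
    have hTeq : T = range m := by
      apply heqc
      have : ((∑ x ∈ T, x : ℕ) : ℤ) = ((∑ i ∈ range m, i : ℕ) : ℤ) := by
        push_cast
        exact hTsum
      exact_mod_cast this
    have hSsub : S ⊆ T.image (fun t : ℕ => rbase p n r + (t : ℤ) * p) := by
      intro x hx
      rw [Finset.mem_image]
      exact ⟨tf x, Finset.mem_image_of_mem _ hx, (hrep x hx).symm⟩
    have himg : T.image (fun t : ℕ => rbase p n r + (t : ℤ) * p) = minFill p n r m := by
      rw [hTeq, minFill]
    rw [himg] at hSsub
    apply Finset.eq_of_subset_of_card_le hSsub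
    rw [card_minFill, hcard]
end
section
variable {p : ℕ} [NeZero p]

def betaSet (n : ℕ) (f : ℕ → ℕ) : Finset ℤ :=
  (range n).image (fun i : ℕ => (f i : ℤ) - ((i : ℤ) + 1))

lemma beta_strictAnti {n : ℕ} {f : ℕ → ℕ} (hf : IsPartWithin n f) :
    ∀ i j : ℕ, i < j → ((f j : ℤ) - ((j:ℤ)+1)) < (f i : ℤ) - ((i:ℤ)+1) := by
  intro i j hij
  have := hf.1 i j (le_of_lt hij)
  have hj : (f j : ℤ) ≤ (f i : ℤ) := by exact_mod_cast this
  have hij' : (i : ℤ) < (j : ℤ) := by exact_mod_cast hij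
  omega

lemma beta_injOn {n : ℕ} {f : ℕ → ℕ} (hf : IsPartWithin n f) :
    Set.InjOn (fun i : ℕ => (f i : ℤ) - ((i:ℤ) + 1)) (range n) := by
  intro a _ b _ hab
  by_contra hne
  rcases Nat.lt_or_ge a b with h | h
  · have := beta_strictAnti hf a b h; simp only at hab; omega
  · have hba : b < a := by omega
    have := beta_strictAnti hf b a hba; simp only at hab; omega

lemma card_betaSet {n : ℕ} {f : ℕ → ℕ} (hf : IsPartWithin n f) :
    (betaSet n f).card = n := by
  rw [betaSet, Finset.card_image_of_injOn (beta_injOn hf), Finset.card_range]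

lemma sum_betaSet {n : ℕ} {f : ℕ → ℕ} (hf : IsPartWithin n f) :
    ∑ x ∈ betaSet n f, x = (psize n f : ℤ) - ∑ i ∈ range n, ((i:ℤ)+1) := by
  rw [betaSet, Finset.sum_image (fun x hx y hy h => beta_injOn hf hx hy h)]
  rw [Finset.sum_sub_distrib, psize]
  push_cast
  ring

lemma mem_betaSet_lb {n : ℕ} {f : ℕ → ℕ} {x : ℤ} (hx : x ∈ betaSet n f) :
    -(n : ℤ) ≤ x := by
  obtain ⟨i, hi, rfl⟩ := Finset.mem_image.mp hx
  simp only [Finset.mem_range] at hi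
  have h1 : (0:ℤ) ≤ (f i : ℤ) := Int.natCast_nonneg _
  have h2 : (i : ℤ) + 1 ≤ n := by exact_mod_cast hi
  omega

/-- residue of the `0`-th entry. -/
def sres (p n : ℕ) (δ : ℤ) (f : ℕ → ℕ) : ZMod p := ((δ - psize n f : ℤ) : ZMod p)

def rcount (p n : ℕ) (δ : ℤ) (f : ℕ → ℕ) (r : ZMod p) : ℕ :=
  (Finset.univ.filter fun m : Fin (n+1) => ((hatRhoZ n δ f m : ℤ) : ZMod p) = r).card

lemma rcount_decomp {n : ℕ} {δ : ℤ} {f : ℕ → ℕ} (hf : IsPartWithin n f) (r : ZMod p) :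
    rcount p n δ f r = (if sres p n δ f = r then 1 else 0)
      + ((betaSet n f).filter fun x : ℤ => ((x : ZMod p) = r)).card := by
  rw [rcount, Finset.card_filter, Fin.sum_univ_succ]
  have h0 : ((hatRhoZ n δ f 0 : ℤ) : ZMod p) = sres p n δ f := by
    simp [hatRhoZ, sres]
  rw [h0]
  congr 1
  have hs : ∀ i : Fin n, ((hatRhoZ n δ f i.succ : ℤ) : ZMod p)
      = ((((f (i : ℕ) : ℤ) - (((i:ℕ) : ℤ) + 1)) : ℤ) : ZMod p) := by
    intro i
    have hv : ((i.succ : Fin (n+1)) : ℕ) = (i : ℕ) + 1 := Fin.val_succ i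
    rw [hatRhoZ]
    rw [hv]
    simp
  calc (∑ i : Fin n, if ((hatRhoZ n δ f i.succ : ℤ) : ZMod p) = r then 1 else 0)
      = ∑ i : Fin n,
          (fun j : ℕ => if ((((f j : ℤ) - ((j:ℤ) + 1)) : ℤ) : ZMod p) = r then 1 else 0) (i : ℕ) := by
        refine Finset.sum_congr rfl fun i _ => ?_
        simp only
        rw [hs i]
    _ = ∑ j ∈ range n,
          if ((((f j : ℤ) - ((j:ℤ) + 1)) : ℤ) : ZMod p) = r then 1 else 0 :=
        Fin.sum_univ_eq_sum_range
          (fun j : ℕ => if ((((f j : ℤ) - ((j:ℤ) + 1)) : ℤ) : ZMod p) = r then 1 else 0) n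
    _ = ((range n).filter fun j =>
          ((((f j : ℤ) - ((j:ℤ) + 1)) : ℤ) : ZMod p) = r).card := (Finset.card_filter _ _).symm
    _ = ((betaSet n f).filter fun x : ℤ => ((x : ZMod p) = r)).card := by
        rw [betaSet, Finset.filter_image]
        rw [Finset.card_image_of_injOn ((beta_injOn hf).mono (Finset.filter_subset _ _))]

lemma sum_rcount (n : ℕ) (δ : ℤ) (f : ℕ → ℕ) :
    ∑ r : ZMod p, rcount p n δ f r = n + 1 := by
  have := Finset.card_eq_sum_card_fiberwise
    (f := fun m : Fin (n+1) => ((hatRhoZ n δ f m : ℤ) : ZMod p))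
    (s := Finset.univ) (t := Finset.univ) (fun x _ => Finset.mem_univ _)
  rw [Finset.card_univ, Fintype.card_fin] at this
  rw [this]
  rfl

lemma rcount_eq_of_simp {n : ℕ} {δ : ℤ} {mu lam : ℕ → ℕ} (h : SimP p n δ mu lam)
    (r : ZMod p) : rcount p n δ mu r = rcount p n δ lam r := by
  obtain ⟨σ, hσ⟩ := h
  apply Finset.card_bij (fun m _ => σ m)
  · intro a ha
    simp only [Finset.mem_filter, Finset.mem_univ, true_and] at ha ⊢
    rw [← hσ a]
    exact ha
  · intro a _ b _ hab
    exact σ.injective hab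
  · intro b hb
    simp only [Finset.mem_filter, Finset.mem_univ, true_and] at hb ⊢
    refine ⟨σ.symm b, ?_, (σ.apply_symm_apply b)⟩
    rw [hσ (σ.symm b), σ.apply_symm_apply]
    exact hb

lemma sum_fiber_decomp (B : Finset ℤ) :
    ∑ x ∈ B, x = ∑ r : ZMod p, ∑ x ∈ B.filter (fun x : ℤ => ((x : ZMod p) = r)), x :=
  (Finset.sum_fiberwise B (fun x : ℤ => (x : ZMod p)) id).symm

lemma sum_cast_fiber (B : Finset ℤ) :
    (∑ x ∈ B, (x : ZMod p)) = ∑ r : ZMod p,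
      ((B.filter (fun x : ℤ => ((x : ZMod p) = r))).card : ZMod p) * r := by
  rw [← Finset.sum_fiberwise B (fun x : ℤ => (x : ZMod p)) (fun x : ℤ => (x : ZMod p))]
  refine Finset.sum_congr rfl fun r _ => ?_
  have : ∀ x ∈ B.filter (fun x : ℤ => ((x : ZMod p) = r)), (x : ZMod p) = r := by
    intro x hx
    exact (Finset.mem_filter.mp hx).2
  rw [Finset.sum_congr rfl this, Finset.sum_const, nsmul_eq_mul]
end
section
variable {p : ℕ} [NeZero p]

lemma G_eq (n : ℕ) (c : ZMod p → ℕ) (s' : ZMod p) (hcs : c s' ≠ 0) :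
    ∑ r : ZMod p, ∑ x ∈ minFill p n r (c r - if s' = r then 1 else 0), x
      = (∑ r : ZMod p, ∑ x ∈ minFill p n r (c r), x)
        - (rbase p n s' + ((c s' : ℤ) - 1) * p) := by
  rw [← Finset.add_sum_erase _ _ (Finset.mem_univ s'),
    ← Finset.add_sum_erase _ (fun r => ∑ x ∈ minFill p n r (c r), x) (Finset.mem_univ s')]
  have h1 : ∑ x ∈ minFill p n s' (c s' - 1), x
      = (∑ x ∈ minFill p n s' (c s'), x) - (rbase p n s' + ((c s' : ℤ) - 1) * p) := by
    obtain ⟨m, hm⟩ : ∃ m, c s' = m + 1 := ⟨c s' - 1, by omega⟩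
    rw [hm]
    simp only [Nat.add_sub_cancel]
    rw [sum_minFill_succ]
    push_cast
    ring
  have h2 : ∀ r ∈ Finset.univ.erase s',
      (∑ x ∈ minFill p n r (c r - if s' = r then 1 else 0), x)
        = ∑ x ∈ minFill p n r (c r), x := by
    intro r hr
    rw [if_neg (fun h => (Finset.mem_erase.mp hr).1 h.symm), Nat.sub_zero]
  rw [Finset.sum_congr rfl h2, if_pos rfl, h1]
  ring

lemma sum_counts_sub (c : ZMod p → ℕ) (s' : ZMod p) (hcs : c s' ≠ 0) :
    ∑ r : ZMod p, (c r - if s' = r then 1 else 0) = (∑ r : ZMod p, c r) - 1 := by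
  rw [← Finset.add_sum_erase _ _ (Finset.mem_univ s'),
    ← Finset.add_sum_erase _ c (Finset.mem_univ s')]
  have h2 : ∀ r ∈ Finset.univ.erase s',
      (c r - if s' = r then 1 else 0) = c r := by
    intro r hr
    rw [if_neg (fun h => (Finset.mem_erase.mp hr).1 h.symm), Nat.sub_zero]
  rw [Finset.sum_congr rfl h2, if_pos rfl]
  have hx : (Finset.univ.erase s').sum c = ∑ x ∈ Finset.univ.erase s', c x := rfl
  omega

/-- any finset of `ℤ` is the union of its fibers mod `p` -/
lemma biUnion_fibers (B : Finset ℤ) :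
    B = Finset.univ.biUnion (fun r : ZMod p => B.filter (fun x : ℤ => ((x : ZMod p) = r))) := by
  ext x
  simp only [Finset.mem_biUnion, Finset.mem_univ, true_and, Finset.mem_filter]
  constructor
  · intro hx; exact ⟨(x : ZMod p), hx, rfl⟩
  · rintro ⟨r, hx, -⟩; exact hx

/-- a partition is determined by its beta-set -/
lemma eq_of_betaSet_eq {n : ℕ} {f g : ℕ → ℕ} (hf : IsPartWithin n f) (hg : IsPartWithin n g)
    (h : betaSet n f = betaSet n g) : f = g := by
  have hsm : ∀ f : ℕ → ℕ, IsPartWithin n f → StrictMono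
      (fun j : Fin n => (f (n - 1 - (j : ℕ)) : ℤ) - (((n - 1 - (j : ℕ) : ℕ) : ℤ) + 1)) := by
    intro f hf a b hab
    have hab' : n - 1 - (b : ℕ) < n - 1 - (a : ℕ) := by
      have := a.isLt; have := b.isLt
      have : (a : ℕ) < b := hab
      omega
    exact beta_strictAnti hf _ _ hab'
  have hmemf : ∀ (f : ℕ → ℕ) (j : Fin n),
      (f (n - 1 - (j : ℕ)) : ℤ) - (((n - 1 - (j : ℕ) : ℕ) : ℤ) + 1) ∈ betaSet n f := by
    intro f j
    rw [betaSet]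
    exact Finset.mem_image_of_mem _ (Finset.mem_range.mpr (by omega))
  have h1 : (fun j : Fin n => (f (n - 1 - (j : ℕ)) : ℤ) - (((n - 1 - (j : ℕ) : ℕ) : ℤ) + 1))
      = (betaSet n g).orderEmbOfFin (card_betaSet hg) :=
    Finset.orderEmbOfFin_unique _ (fun j => h ▸ hmemf f j) (hsm f hf)
  have h2 : (fun j : Fin n => (g (n - 1 - (j : ℕ)) : ℤ) - (((n - 1 - (j : ℕ) : ℕ) : ℤ) + 1))
      = (betaSet n g).orderEmbOfFin (card_betaSet hg) :=
    Finset.orderEmbOfFin_unique _ (fun j => hmemf g j) (hsm g hg)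
  funext i
  rcases Nat.lt_or_ge i n with hi | hi
  · have := congrFun (h1.trans h2.symm) ⟨n - 1 - i, by omega⟩
    simp only at this
    have hidx : n - 1 - (n - 1 - i) = i := by omega
    rw [hidx] at this
    have : (f i : ℤ) = g i := by omega
    exact_mod_cast this
  · rw [hf.2 i hi, hg.2 i hi]
end
lemma orbit_bound {p n : ℕ} [NeZero p] {δ : ℤ} {lam mu : ℕ → ℕ}
    (hmu : IsPartWithin n mu) (hsim : SimP p n δ mu lam) :
    rcount p n δ lam (sres p n δ mu) ≠ 0 ∧
    ((∑ r : ZMod p, ∑ x ∈ minFill p n r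
        (rcount p n δ lam r - if sres p n δ mu = r then 1 else 0), x)
      ≤ ∑ x ∈ betaSet n mu, x) ∧
    ((∑ x ∈ betaSet n mu, x
        = ∑ r : ZMod p, ∑ x ∈ minFill p n r
            (rcount p n δ lam r - if sres p n δ mu = r then 1 else 0), x) →
      ∀ r : ZMod p, (betaSet n mu).filter (fun x : ℤ => ((x : ZMod p) = r))
        = minFill p n r (rcount p n δ lam r - if sres p n δ mu = r then 1 else 0)) := by
  set c : ZMod p → ℕ := rcount p n δ lam with hc
  set s' : ZMod p := sres p n δ mu with hs'
  set fib : ZMod p → Finset ℤ :=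
    fun r => (betaSet n mu).filter (fun x : ℤ => ((x : ZMod p) = r)) with hfib
  have hcnt : ∀ r, c r = (if s' = r then 1 else 0) + (fib r).card := by
    intro r
    rw [hc, ← rcount_eq_of_simp hsim r, rcount_decomp hmu r]
  have hcs' : c s' ≠ 0 := by
    have := hcnt s'
    rw [if_pos rfl] at this
    omega
  have hfibcard : ∀ r, (fib r).card = c r - (if s' = r then 1 else 0) := by
    intro r; have := hcnt r; omega
  have hrun : ∀ r : ZMod p,
      (∑ x ∈ minFill p n r (c r - if s' = r then 1 else 0), x ≤ ∑ x ∈ fib r, x) ∧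
      (∑ x ∈ fib r, x = ∑ x ∈ minFill p n r (c r - if s' = r then 1 else 0), x →
        fib r = minFill p n r (c r - if s' = r then 1 else 0)) := by
    intro r
    apply runner_min n r _ (fib r) (hfibcard r)
    intro x hx
    obtain ⟨hxB, hxr⟩ := Finset.mem_filter.mp hx
    exact ⟨mem_betaSet_lb hxB, hxr⟩
  have hdecomp : ∑ x ∈ betaSet n mu, x = ∑ r : ZMod p, ∑ x ∈ fib r, x :=
    sum_fiber_decomp _
  refine ⟨hcs', ?_, ?_⟩
  · rw [hdecomp]
    exact Finset.sum_le_sum (fun r _ => (hrun r).1)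
  · intro heq r
    rw [hdecomp] at heq
    have hall := (Finset.sum_eq_sum_iff_of_le (fun r _ => (hrun r).1)).mp heq.symm
    exact (hrun r).2 ((hall r (Finset.mem_univ r)).symm)
section
variable {p : ℕ} [NeZero p]

def topv (p n : ℕ) [NeZero p] (c : ZMod p → ℕ) (r : ZMod p) : ℤ :=
  rbase p n r + ((c r : ℤ) - 1) * p

def Kval (p n : ℕ) [NeZero p] (c : ZMod p → ℕ) : ℤ :=
  ∑ r : ZMod p, ∑ x ∈ minFill p n r (c r), x

lemma G_eq' (n : ℕ) (c : ZMod p → ℕ) (s' : ZMod p) (hcs : c s' ≠ 0) :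
    ∑ r : ZMod p, ∑ x ∈ minFill p n r (c r - if s' = r then 1 else 0), x
      = Kval p n c - topv p n c s' := G_eq n c s' hcs

lemma topv_inj (n : ℕ) (c : ZMod p → ℕ) :
    ∀ r r' : ZMod p, topv p n c r = topv p n c r' → r = r' := by
  intro r r' hrr
  have hp : 0 < (p:ℤ) := by exact_mod_cast Nat.pos_of_ne_zero (NeZero.ne p)
  have hub := rbase_ub (p := p) n r
  have hub' := rbase_ub (p := p) n r'
  have hlb := rbase_lb (p := p) n r
  have hlb' := rbase_lb (p := p) n r'
  set d : ℤ := (c r' : ℤ) - (c r : ℤ) with hd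
  have hdd : rbase p n r - rbase p n r' = d * p := by
    rw [topv, topv] at hrr
    linear_combination hrr
  have hd0 : d = 0 := by
    rcases lt_trichotomy d 0 with h | h | h
    · have h1 : d ≤ -1 := by omega
      nlinarith
    · exact h
    · have h1 : 1 ≤ d := by omega
      nlinarith
  have hbase : rbase p n r = rbase p n r' := by
    rw [hd0] at hdd; omega
  rw [← rbase_res (p := p) n r, ← rbase_res (p := p) n r', hbase]

lemma cast_psize_eq {n : ℕ} {f : ℕ → ℕ} (hf : IsPartWithin n f) :
    ∑ r : ZMod p, (((betaSet n f).filter (fun x : ℤ => ((x : ZMod p) = r))).card : ZMod p) * r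
      = ((psize n f : ℤ) : ZMod p) - ((∑ i ∈ range n, ((i:ℤ)+1) : ℤ) : ZMod p) := by
  rw [← sum_cast_fiber]
  have h1 : (∑ x ∈ betaSet n f, (x : ZMod p)) = (((∑ x ∈ betaSet n f, x : ℤ)) : ZMod p) := by
    push_cast
    rfl
  rw [h1, sum_betaSet hf]
  push_cast
  ring

lemma sum_ite_mul (s' : ZMod p) :
    ∑ r : ZMod p, ((if s' = r then 1 else 0 : ℕ) : ZMod p) * r = s' := by
  have h : ∀ r : ZMod p, ((if s' = r then 1 else 0 : ℕ) : ZMod p) * r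
      = if s' = r then r else 0 := by
    intro r; split <;> simp
  rw [Finset.sum_congr rfl (fun r _ => h r), Finset.sum_ite_eq]
  simp

lemma count_map_univ_eq_rcount {n : ℕ} (δ : ℤ) (f : ℕ → ℕ) (b : ZMod p) :
    Multiset.count b (Multiset.map
      (fun m : Fin (n+1) => ((hatRhoZ n δ f m : ℤ) : ZMod p)) Finset.univ.val)
      = rcount p n δ f b := by
  rw [Multiset.count_map, rcount]
  have h : (Finset.univ.filter
        (fun m : Fin (n+1) => ((hatRhoZ n δ f m : ℤ) : ZMod p) = b)).card
      = Multiset.card (Multiset.filter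
        (fun m : Fin (n+1) => ((hatRhoZ n δ f m : ℤ) : ZMod p) = b) Finset.univ.val) := rfl
  rw [h]
  congr 1
  simp [eq_comm]
end
set_option maxHeartbeats 2000000 in
/-- Proposition 8.4 of the paper: for `δ ∈ {1,…,p-1}` the orbit
`O_λ^p(n;δ)` contains a unique element of minimal size. -/
theorem orbit_has_unique_minimal_element
    (p : ℕ) [Fact p.Prime] (δ : ℕ) (hδ1 : 1 ≤ δ) (hδp : δ ≤ p - 1)
    (n : ℕ) (lam : ℕ → ℕ) (hlam : IsPartWithin n lam) (hsz : psize n lam ≤ n) :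
    ∃ mu0, InOrbit p n (δ : ℤ) lam mu0 ∧
      ∀ mu, InOrbit p n (δ : ℤ) lam mu →
        psize n mu0 ≤ psize n mu ∧ (psize n mu = psize n mu0 → mu = mu0) := by
  haveI : NeZero p := ⟨(Fact.out : p.Prime).ne_zero⟩
  classical
  set δ' : ℤ := (δ : ℤ) with hδ'
  set c : ZMod p → ℕ := rcount p n δ' lam with hc
  set TT : ℤ := ∑ i ∈ range n, ((i:ℤ)+1) with hTT
  -- λ is in its own orbit
  have hlamsim : SimP p n δ' lam lam := ⟨1, fun m => rfl⟩
  obtain ⟨hclam, hblam, -⟩ := orbit_bound hlam hlamsim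
  -- choose the marked runner s
  have hsupp : ((Finset.univ : Finset (ZMod p)).filter (fun r => c r ≠ 0)).Nonempty :=
    ⟨sres p n δ' lam, Finset.mem_filter.mpr ⟨Finset.mem_univ _, hclam⟩⟩
  obtain ⟨s, hsmem, hsmax⟩ := Finset.exists_max_image _ (topv p n c) hsupp
  have hcs : c s ≠ 0 := (Finset.mem_filter.mp hsmem).2
  -- the minimal bead configuration
  set B0 : Finset ℤ := Finset.univ.biUnion
    (fun r : ZMod p => minFill p n r (c r - if s = r then 1 else 0)) with hB0
  have hdisj : ∀ r ∈ (Finset.univ : Finset (ZMod p)), ∀ r' ∈ Finset.univ, r ≠ r' →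
      Disjoint (minFill p n r (c r - if s = r then 1 else 0))
        (minFill p n r' (c r' - if s = r' then 1 else 0)) := by
    intro r _ r' _ hne
    rw [Finset.disjoint_left]
    intro x hx hx'
    exact hne ((mem_minFill hx).2.symm.trans (mem_minFill hx').2)
  have htot : ∑ r : ZMod p, c r = n + 1 := sum_rcount n δ' lam
  have hcardB0 : B0.card = n := by
    rw [hB0, Finset.card_biUnion hdisj]
    rw [Finset.sum_congr rfl (fun r _ => card_minFill (p := p) n r _), sum_counts_sub c s hcs,
      htot]
    omega
  have hB0mem : ∀ x ∈ B0, -(n:ℤ) ≤ x := by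
    intro x hx
    rw [hB0] at hx
    obtain ⟨r, -, hr⟩ := Finset.mem_biUnion.mp hx
    exact (mem_minFill hr).1
  have hB0fiber : ∀ r : ZMod p, B0.filter (fun x : ℤ => ((x : ZMod p) = r))
      = minFill p n r (c r - if s = r then 1 else 0) := by
    intro r
    ext x
    simp only [Finset.mem_filter, hB0, Finset.mem_biUnion, Finset.mem_univ, true_and]
    constructor
    · rintro ⟨⟨r', hr'⟩, rfl⟩
      rwa [(mem_minFill hr').2]
    · intro hx
      exact ⟨⟨r, hx⟩, (mem_minFill hx).2⟩
  have hsumB0 : ∑ x ∈ B0, x = Kval p n c - topv p n c s := by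
    rw [sum_fiber_decomp (p := p) B0,
      Finset.sum_congr rfl (fun r _ => by rw [hB0fiber r])]
    exact G_eq' n c s hcs
  -- construct μ₀ from B0
  set emb := B0.orderEmbOfFin hcardB0 with hemb
  have hembmem : ∀ j : Fin n, (emb j : ℤ) ∈ B0 := fun j => Finset.orderEmbOfFin_mem B0 hcardB0 j
  have hstep : ∀ d : ℕ, ∀ a b : Fin n, (b : ℕ) = (a : ℕ) + d → (emb a : ℤ) + (d : ℤ) ≤ emb b := by
    intro d
    induction d with
    | zero =>
      intro a b hb
      have hab : a = b := Fin.ext (by omega)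
      rw [hab]
      simp
    | succ k ih =>
      intro a b hb
      have hbpos : (a:ℕ) + k < n := by have := b.isLt; omega
      have h1 := ih a ⟨(a:ℕ) + k, hbpos⟩ rfl
      have h2 : (emb ⟨(a:ℕ) + k, hbpos⟩ : ℤ) < emb b := by
        apply emb.strictMono
        rw [Fin.lt_def]
        simp only
        omega
      push_cast
      push_cast at h1
      omega
  have hemb0 : ∀ j : Fin n, -(n:ℤ) + ((j:ℕ) : ℤ) ≤ emb j := by
    intro j
    have h0 : (0:ℕ) < n := lt_of_le_of_lt (Nat.zero_le _) j.isLt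
    have hz : -(n:ℤ) ≤ emb ⟨0, h0⟩ := hB0mem _ (hembmem ⟨0, h0⟩)
    have := hstep (j:ℕ) ⟨0, h0⟩ j (by simp)
    omega
  set bfun : ℕ → ℤ := fun t => if ht : t < n then (emb ⟨t, ht⟩ : ℤ) else 0 with hbfun
  have hbfun_mem : ∀ t, t < n → bfun t ∈ B0 := by
    intro t ht
    simp only [hbfun, dif_pos ht]
    exact hembmem _
  have hbstep : ∀ t u, t ≤ u → u < n → bfun t + ((u - t : ℕ) : ℤ) ≤ bfun u := by
    intro t u htu hu
    have ht : t < n := by omega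
    simp only [hbfun, dif_pos ht, dif_pos hu]
    exact hstep (u - t) ⟨t, ht⟩ ⟨u, hu⟩ (by simp only [Fin.val_mk]; omega)
  have hblb : ∀ t, t < n → -(n:ℤ) + (t : ℤ) ≤ bfun t := by
    intro t ht
    simp only [hbfun, dif_pos ht]
    have := hemb0 ⟨t, ht⟩
    simpa using this
  set mu0 : ℕ → ℕ := fun i => if i < n then (bfun (n - 1 - i) + ((i:ℤ) + 1)).toNat else 0
    with hmu0
  have hbeta0 : ∀ i : ℕ, i < n → (mu0 i : ℤ) - ((i:ℤ)+1) = bfun (n - 1 - i) := by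
    intro i h
    have hlb := hblb (n - 1 - i) (by omega)
    have hnn : 0 ≤ bfun (n - 1 - i) + ((i:ℤ) + 1) := by omega
    simp only [hmu0, if_pos h]
    rw [Int.toNat_of_nonneg hnn]
    ring
  have hmu0part : IsPartWithin n mu0 := by
    constructor
    · intro i j hij
      rcases Nat.lt_or_ge j n with hj | hj
      · have hi : i < n := lt_of_le_of_lt hij hj
        have hbi := hbeta0 i hi
        have hbj := hbeta0 j hj
        have hstep' := hbstep (n - 1 - j) (n - 1 - i) (by omega) (by omega)
        have : (mu0 j : ℤ) ≤ (mu0 i : ℤ) := by omega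
        exact_mod_cast this
      · have : mu0 j = 0 := by simp only [hmu0]; rw [if_neg (Nat.not_lt.mpr hj)]
        rw [this]
        exact Nat.zero_le _
    · intro i hi
      simp only [hmu0]
      rw [if_neg (Nat.not_lt.mpr hi)]
  have hbetaSet0 : betaSet n mu0 = B0 := by
    apply Finset.eq_of_subset_of_card_le
    · intro x hx
      obtain ⟨i, hi, rfl⟩ := Finset.mem_image.mp hx
      rw [Finset.mem_range] at hi
      rw [hbeta0 i hi]
      exact hbfun_mem _ (by omega)
    · rw [hcardB0, card_betaSet hmu0part]
  -- size identities
  have hpsizeId : ∀ f : ℕ → ℕ, IsPartWithin n f →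
      (psize n f : ℤ) = (∑ x ∈ betaSet n f, x) + TT := by
    intro f hf
    rw [sum_betaSet hf, hTT]
    ring
  have hpsize0 : (psize n mu0 : ℤ) = (Kval p n c - topv p n c s) + TT := by
    rw [hpsizeId mu0 hmu0part, hbetaSet0, hsumB0]
  -- μ₀ is no bigger than λ
  have hGlam := G_eq' n c (sres p n δ' lam) hclam
  have hts : topv p n c (sres p n δ' lam) ≤ topv p n c s :=
    hsmax _ (Finset.mem_filter.mpr ⟨Finset.mem_univ _, hclam⟩)
  have hlamlb : Kval p n c - topv p n c s ≤ ∑ x ∈ betaSet n lam, x := by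
    rw [hGlam] at hblam
    omega
  have hmu0lam : psize n mu0 ≤ psize n lam := by
    have h1 := hpsizeId lam hlam
    have : (psize n mu0 : ℤ) ≤ (psize n lam : ℤ) := by
      rw [hpsize0, h1]
      omega
    exact_mod_cast this
  have hmu0sz : psize n mu0 ≤ n := le_trans hmu0lam hsz
  -- residue of the 0-entry of μ₀ is s
  have hcntlam : ∀ r, c r = (if sres p n δ' lam = r then 1 else 0)
      + ((betaSet n lam).filter (fun x : ℤ => ((x : ZMod p) = r))).card :=
    fun r => rcount_decomp hlam r
  have hAlam : ∑ r : ZMod p, ((c r : ℕ) : ZMod p) * r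
      = sres p n δ' lam + ((psize n lam : ℤ) : ZMod p) - ((TT : ℤ) : ZMod p) := by
    have h1 : ∀ r : ZMod p, ((c r : ℕ) : ZMod p) * r
        = ((if sres p n δ' lam = r then 1 else 0 : ℕ) : ZMod p) * r
          + (((betaSet n lam).filter (fun x : ℤ => ((x : ZMod p) = r))).card : ZMod p) * r := by
      intro r
      rw [hcntlam r]
      push_cast
      ring
    rw [Finset.sum_congr rfl (fun r _ => h1 r), Finset.sum_add_distrib, sum_ite_mul,
      cast_psize_eq hlam]
    rw [hTT]
    ring
  have hAval : ∑ r : ZMod p, ((c r : ℕ) : ZMod p) * r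
      = ((δ' : ZMod p)) - ((TT : ℤ) : ZMod p) := by
    rw [hAlam, sres]
    push_cast
    ring
  have hfib0card : ∀ r : ZMod p,
      ((betaSet n mu0).filter (fun x : ℤ => ((x : ZMod p) = r))).card
        = c r - (if s = r then 1 else 0) := by
    intro r
    rw [hbetaSet0, hB0fiber r, card_minFill]
  have hsres0 : sres p n δ' mu0 = s := by
    have h1 : ((psize n mu0 : ℤ) : ZMod p) - ((TT : ℤ) : ZMod p)
        = ∑ r : ZMod p, ((c r - if s = r then 1 else 0 : ℕ) : ZMod p) * r := by
      rw [← cast_psize_eq hmu0part]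
      exact Finset.sum_congr rfl (fun r _ => by rw [hfib0card r])
    have h2 : ∑ r : ZMod p, ((c r - if s = r then 1 else 0 : ℕ) : ZMod p) * r
        = (∑ r : ZMod p, ((c r : ℕ) : ZMod p) * r) - s := by
      have h3 : ∀ r : ZMod p, ((c r - if s = r then 1 else 0 : ℕ) : ZMod p) * r
          = ((c r : ℕ) : ZMod p) * r - ((if s = r then 1 else 0 : ℕ) : ZMod p) * r := by
        intro r
        have hle : (if s = r then 1 else 0) ≤ c r := by
          split_ifs with h
          · subst h; omega
          · omega
        rw [Nat.cast_sub hle]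
        ring
      rw [Finset.sum_congr rfl (fun r _ => h3 r), Finset.sum_sub_distrib, sum_ite_mul]
    rw [sres]
    have h4 : ((psize n mu0 : ℤ) : ZMod p) = (δ' : ZMod p) - s := by
      rw [h2, hAval] at h1
      linear_combination h1
    push_cast
    push_cast at h4
    linear_combination -h4
  have hrc0 : ∀ r, rcount p n δ' mu0 r = c r := by
    intro r
    rw [rcount_decomp hmu0part r, hsres0, hfib0card r]
    split_ifs with h
    · have : c r ≠ 0 := h ▸ hcs
      omega
    · omega
  have hsim0 : SimP p n δ' mu0 lam := by
    have hmeq : Multiset.map (fun m : Fin (n+1) => ((hatRhoZ n δ' mu0 m : ℤ) : ZMod p))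
          Finset.univ.val
        = Multiset.map (fun m : Fin (n+1) => ((hatRhoZ n δ' lam m : ℤ) : ZMod p))
          Finset.univ.val := by
      apply Multiset.ext.mpr
      intro b
      rw [count_map_univ_eq_rcount δ' mu0 b, count_map_univ_eq_rcount δ' lam b, hrc0 b]
    obtain ⟨σ, hσ⟩ := exists_perm_of_map_univ_eq _ _ hmeq
    exact ⟨σ, hσ⟩
  refine ⟨mu0, ⟨hmu0part, hmu0sz, hsim0⟩, ?_⟩
  intro mu hmuorb
  obtain ⟨hmupart, hmusz, hmusim⟩ := hmuorb
  obtain ⟨hcmu, hbmu, heqmu⟩ := orbit_bound hmupart hmusim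
  have hGmu := G_eq' n c (sres p n δ' mu) hcmu
  have htsmu : topv p n c (sres p n δ' mu) ≤ topv p n c s :=
    hsmax _ (Finset.mem_filter.mpr ⟨Finset.mem_univ _, hcmu⟩)
  have hlow : Kval p n c - topv p n c s ≤ ∑ x ∈ betaSet n mu, x := by
    rw [hGmu] at hbmu
    omega
  have hple : psize n mu0 ≤ psize n mu := by
    have : (psize n mu0 : ℤ) ≤ (psize n mu : ℤ) := by
      rw [hpsize0, hpsizeId mu hmupart]
      omega
    exact_mod_cast this
  refine ⟨hple, ?_⟩
  intro heq
  have hZ : (∑ x ∈ betaSet n mu, x) = Kval p n c - topv p n c s := by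
    have h5 := hpsizeId mu hmupart
    rw [heq, hpsize0] at h5
    omega
  have hts_eq : topv p n c (sres p n δ' mu) = topv p n c s := by
    rw [hGmu] at hbmu
    omega
  have hseq : sres p n δ' mu = s := topv_inj n c _ _ hts_eq
  have hfeq := heqmu (by rw [hZ, hGmu, hts_eq])
  have hBeq : betaSet n mu = B0 := by
    rw [biUnion_fibers (p := p) (betaSet n mu), hB0]
    apply Finset.biUnion_congr rfl
    intro r _
    rw [hfeq r, hseq]
  exact eq_of_betaSet_eq hmupart hmu0part (hBeq.trans hbetaSet0.symm)
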